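/- In the two-player weighted game with w_min < w_max = 1 - w_min and w_min < α ≤ 1/2 ≤ w_max, if (p₁, p₂) are the probabilities that players 1 and 2 respectively place on label y* in a mixed Nash equilibrium, then p₁ = (w_max - α)/(1 - 2·w_min) and p₂ = (α - w_min)/(1 - 2·w_min), and moreover p₁ + p₂ = 1. -/

import Mathlib

set_option maxHeartbeats 2000000


/-- Expected payoff of player 1 when player 1 plays `y*` with probability `p` and
player 2 plays `y*` with probability `q`. -/
def U1 (α wmin wmax p q : ℝ) : ℝ :=
  p * (q * wmax + (1 - q) * (1 - α)) + (1 - p) * (q * α + (1 - q) * wmax)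

/-- Expected payoff of player 2. -/
def U2 (α wmin wmax p q : ℝ) : ℝ :=
  q * (p * wmin + (1 - p) * (1 - α)) + (1 - q) * (p * α + (1 - p) * wmin)

/-- Mixed Nash equilibrium in terms of probabilities `p, q` of playing `y*`. -/
def isMixedNash (α wmin wmax p q : ℝ) : Prop :=
  p ∈ Set.Icc (0 : ℝ) 1 ∧ q ∈ Set.Icc (0 : ℝ) 1 ∧
  (∀ p' ∈ Set.Icc (0 : ℝ) 1, U1 α wmin wmax p' q ≤ U1 α wmin wmax p q) ∧
  (∀ q' ∈ Set.Icc (0 : ℝ) 1, U2 α wmin wmax p q' ≤ U2 α wmin wmax p q)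

theorem mixed_nash_probabilities (α wmin wmax p₁ p₂ : ℝ)
    (hw0 : 0 < wmin) (hw : wmin < wmax) (hsum : wmin + wmax = 1)
    (hαw : wmin < α) (hα1 : α ≤ 1 / 2)
    (hnash : isMixedNash α wmin wmax p₁ p₂) :
    p₁ = (wmax - α) / (1 - 2 * wmin) ∧
    p₂ = (α - wmin) / (1 - 2 * wmin) ∧
    p₁ + p₂ = 1 := by
  obtain ⟨⟨hp0, hp1⟩, ⟨hq0, hq1⟩, h1, h2⟩ := hnash
  have hw' : wmin = 1 - wmax := by linarith
  subst hw'
  have hwmax : 1 / 2 < wmax := by linarith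
  have A1 := h1 1 ⟨by norm_num, by norm_num⟩
  have A0 := h1 0 ⟨by norm_num, by norm_num⟩
  have B1 := h2 1 ⟨by norm_num, by norm_num⟩
  have B0 := h2 0 ⟨by norm_num, by norm_num⟩
  simp only [U1, U2] at A1 A0 B1 B0
  set c1 : ℝ := p₂ * (wmax - α) + (1 - p₂) * ((1 - wmax) - α) with hc1
  set c2 : ℝ := p₁ * ((1 - wmax) - α) + (1 - p₁) * (wmax - α) with hc2
  have A1' : (1 - p₁) * c1 ≤ 0 := by rw [hc1]; nlinarith [A1]
  have A0' : 0 ≤ p₁ * c1 := by rw [hc1]; nlinarith [A0]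
  have B1' : (1 - p₂) * c2 ≤ 0 := by rw [hc2]; nlinarith [B1]
  have B0' : 0 ≤ p₂ * c2 := by rw [hc2]; nlinarith [B0]
  clear A1 A0 B1 B0 h1 h2
  have hc1z : c1 = 0 := by
    rcases lt_trichotomy c1 0 with h | h | h
    · have hp : p₁ = 0 := by
        by_contra hne
        have hpos : 0 < p₁ := lt_of_le_of_ne hp0 (Ne.symm hne)
        nlinarith [mul_pos hpos (neg_pos.mpr h)]
      have hc2pos : 0 < c2 := by rw [hc2, hp]; nlinarith
      have hq : p₂ = 1 := by
        by_contra hne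
        have hlt : p₂ < 1 := lt_of_le_of_ne hq1 hne
        nlinarith [mul_pos (by linarith : (0:ℝ) < 1 - p₂) hc2pos]
      rw [hc1, hq] at h; norm_num at h; linarith
    · exact h
    · have hp : p₁ = 1 := by
        by_contra hne
        have hlt : p₁ < 1 := lt_of_le_of_ne hp1 hne
        nlinarith [mul_pos (by linarith : (0:ℝ) < 1 - p₁) h]
      have hc2neg : c2 < 0 := by rw [hc2, hp]; nlinarith
      have hq : p₂ = 0 := by
        by_contra hne
        have hpos : 0 < p₂ := lt_of_le_of_ne hq0 (Ne.symm hne)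
        nlinarith [mul_pos hpos (neg_pos.mpr hc2neg)]
      rw [hc1, hq] at h; norm_num at h; linarith
  have hD : (0 : ℝ) < 1 - 2 * (1 - wmax) := by linarith
  rw [hc1] at hc1z
  have hq01 : 0 < p₂ ∧ p₂ < 1 := by
    constructor
    · nlinarith [hc1z]
    · nlinarith [hc1z]
  have hc2z : c2 = 0 := by
    rcases lt_trichotomy c2 0 with h | h | h
    · exfalso
      have hm : 0 < p₂ * -c2 := mul_pos hq01.1 (neg_pos.mpr h)
      have he : p₂ * -c2 = -(p₂ * c2) := by ring
      rw [he] at hm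
      linarith [B0']
    · exact h
    · exfalso
      have hm : 0 < (1 - p₂) * c2 := mul_pos (by linarith [hq01.2]) h
      linarith [B1']
  have hp₂ : p₂ = (α - (1 - wmax)) / (1 - 2 * (1 - wmax)) := by
    rw [eq_div_iff (by linarith : (1 : ℝ) - 2 * (1 - wmax) ≠ 0)]
    linear_combination hc1z
  rw [hc2] at hc2z
  have hp₁ : p₁ = (wmax - α) / (1 - 2 * (1 - wmax)) := by
    rw [eq_div_iff (by linarith : (1 : ℝ) - 2 * (1 - wmax) ≠ 0)]
    linear_combination -hc2z
  refine ⟨hp₁, hp₂, ?_⟩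
  rw [hp₁, hp₂, ← add_div, div_eq_one_iff_eq (by linarith : (1 : ℝ) - 2 * (1 - wmax) ≠ 0)]
  ring
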